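/- Let T be a finite unitrivalent tree with univalent vertices labeled by {1,…,m}, and for each univalent vertex v let B_v(T) ∈ L_{n+1} be the Lie bracket in the free Lie ring L on X₁,…,X_m obtained by taking v as root (where n is the number of trivalent vertices of T). Then the element η(T) := Σ_v X_{ℓ(v)} ⊗ B_v(T), summing over all univalent vertices v with label ℓ(v), lies in the kernel D_n of the bracket map L₁ ⊗ L_{n+1} → L_{n+2}. -/

import Mathlib

open scoped TensorProduct

/-- Rooted labeled unitrivalent trees with leaves labeled in `Fin m`
(equivalently, formal non-associative bracketings of the labels). -/
inductive RTree (m : ℕ) : Type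
  | leaf : Fin m → RTree m
  | node : RTree m → RTree m → RTree m

/-- The free Lie ring on `m` generators. -/
abbrev FreeLieZ (m : ℕ) := FreeLieAlgebra ℤ (Fin m)

/-- The Lie element associated to a rooted tree: each trivalent vertex is a
Lie bracket. -/
noncomputable def RTree.lieOf {m : ℕ} : RTree m → FreeLieZ m
  | .leaf i => FreeLieAlgebra.of ℤ i
  | .node a b => ⁅RTree.lieOf a, RTree.lieOf b⁆

/-- Auxiliary sum-over-roots map: `etaAux T w = Σ_{v leaf of T} X_{ℓ(v)} ⊗ B_v`,
where `w` is the Lie element of the complement of `T` in the glued unrooted tree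
and `B_v` is the Lie bracket obtained by re-rooting at `v`. -/
noncomputable def etaAux {m : ℕ} : RTree m → FreeLieZ m → FreeLieZ m ⊗[ℤ] FreeLieZ m
  | .leaf i, w => FreeLieAlgebra.of ℤ i ⊗ₜ[ℤ] w
  | .node a b, w => etaAux a ⁅RTree.lieOf b, w⁆ + etaAux b ⁅w, RTree.lieOf a⁆

/-- `η` of the unrooted tree `⟨I,J⟩` obtained by gluing the roots of `I` and `J`:
the sum `Σ_v X_{ℓ(v)} ⊗ B_v(⟨I,J⟩)` over all univalent vertices. -/
noncomputable def etaGlue {m : ℕ} (I J : RTree m) : FreeLieZ m ⊗[ℤ] FreeLieZ m :=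
  etaAux I (RTree.lieOf J) + etaAux J (RTree.lieOf I)

/-- `η(J^∞) := (1/2)·η(⟨J,J⟩)`, realized as the canonical half
`etaAux J (lieOf J)` of `etaGlue J J`. -/
noncomputable def etaInf {m : ℕ} (J : RTree m) : FreeLieZ m ⊗[ℤ] FreeLieZ m :=
  etaAux J (RTree.lieOf J)

/-- The bracket map `L ⊗ L → L`, `X ⊗ Y ↦ [X,Y]`; `D_n` is its kernel on the
graded piece `L₁ ⊗ L_{n+1}`. -/
noncomputable def bracketMap (m : ℕ) : FreeLieZ m ⊗[ℤ] FreeLieZ m →ₗ[ℤ] FreeLieZ m :=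
  TensorProduct.lift (LinearMap.mk₂ ℤ (fun x y => ⁅x, y⁆)
    (fun _ _ _ => add_lie _ _ _)
    (fun _ _ _ => smul_lie _ _ _)
    (fun _ _ _ => lie_add _ _ _)
    (fun _ _ _ => lie_smul _ _ _))

/-- For any unrooted labeled unitrivalent tree `T = ⟨I,J⟩` (every such tree arises
by gluing two rooted trees at the roots), the element
`η(T) = Σ_v X_{ℓ(v)} ⊗ B_v(T)` lies in the kernel `D_n` of the bracket map
(cyclic symmetry). -/
lemma bracketMap_etaAux {m : ℕ} (T : RTree m) (w : FreeLieZ m) :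
    bracketMap m (etaAux T w) = ⁅T.lieOf, w⁆ := by
  induction T generalizing w with
  | leaf i =>
      simp [etaAux, RTree.lieOf, bracketMap]
      exact TensorProduct.lift.tmul _ _
  | node a b iha ihb =>
      simp only [etaAux, RTree.lieOf, map_add, iha, ihb]
      rw [lie_lie]
      rw [← lie_skew a.lieOf w, lie_neg]
      abel

theorem eta_mem_ker_bracketMap (m : ℕ) (I J : RTree m) :
    etaGlue I J ∈ LinearMap.ker (bracketMap m) := by
  simp only [LinearMap.mem_ker, etaGlue, map_add, bracketMap_etaAux]
  rw [← lie_skew]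
  abel
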